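/- Lemma 1. Assume J¹ ≠ 0 and hˣ ≠ 0. Let k₁ be an integer with 2 ≤ k₁ and 2·k₁ ≤ L, and let Q be a k₁-candidate. Then the expansion coefficient c_A of Q vanishes for every (k₁,ℓ₂)-support Pauli product A of type ii-b that contains the Pauli operator X at some site of its non-Z edge, for every ℓ₂ ∈ {1,...,L} and every position of its bounding box. -/
import Mathlib


open scoped Classical

namespace Ising2D

/-- Single-site Pauli operators (including the identity). -/
inductive PauliOp : Type
  | I : PauliOp
  | X : PauliOp
  | Y : PauliOp
  | Z : PauliOp
  deriving DecidableEq

/-- The 2×2 matrices of the single-site Pauli operators. -/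
noncomputable def pauliMat : PauliOp → Matrix (Fin 2) (Fin 2) ℂ
  | PauliOp.I => 1
  | PauliOp.X => !![0, 1; 1, 0]
  | PauliOp.Y => !![0, -Complex.I; Complex.I, 0]
  | PauliOp.Z => !![1, 0; 0, -1]

/-- Sites of the two-dimensional periodic lattice `Λ = (ℤ/L)²`. -/
abbrev Site (L : ℕ) := ZMod L × ZMod L

variable {L : ℕ}

/-- The matrix (on `⨂_{r ∈ Λ} ℂ²`, realized as matrices indexed by spin
configurations `Λ → Fin 2`) of the Pauli product `∏_r A_r`. -/
noncomputable def pauliProd [NeZero L] (A : Site L → PauliOp) :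
    Matrix (Site L → Fin 2) (Site L → Fin 2) ℂ :=
  fun s t => ∏ p : Site L, pauliMat (A p) (s p) (t p)

/-- The (unique) expansion coefficient of an operator `Q` on the Pauli product `A`,
obtained from the trace inner product (Pauli products form an orthogonal basis with
`Tr (P_A P_B) = 2^|Λ| δ_{A,B}`). -/
noncomputable def coeff [NeZero L] (Q : Matrix (Site L → Fin 2) (Site L → Fin 2) ℂ)
    (A : Site L → PauliOp) : ℂ :=
  Matrix.trace (pauliProd A * Q) / 2 ^ Fintype.card (Site L)

/-- The Pauli product acting as `P` at site `r` and trivially elsewhere. -/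
def singleSite (r : Site L) (P : PauliOp) : Site L → PauliOp :=
  fun p => if p = r then P else PauliOp.I

/-- The Pauli product acting as `Z` at the two sites `r, s` and trivially elsewhere. -/
def twoSiteZZ (r s : Site L) : Site L → PauliOp :=
  fun p => if p = r ∨ p = s then PauliOp.Z else PauliOp.I

/-- The Hamiltonian
`H = Σ_r (J¹ Z_r Z_{r+e₁} + J² Z_r Z_{r+e₂} + hˣ X_r + h^z Z_r)`. -/
noncomputable def ham [NeZero L] (J1 J2 hx hz : ℝ) :
    Matrix (Site L → Fin 2) (Site L → Fin 2) ℂ :=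
  ∑ r : Site L,
    ((J1 : ℂ) • pauliProd (twoSiteZZ r (r.1 + 1, r.2))
      + (J2 : ℂ) • pauliProd (twoSiteZZ r (r.1, r.2 + 1))
      + (hx : ℂ) • pauliProd (singleSite r PauliOp.X)
      + (hz : ℂ) • pauliProd (singleSite r PauliOp.Z))

/-- `A` is an `(ℓ₁,ℓ₂)`-support Pauli product with (minimal) bounding box cornered
at `r`: its support is contained in the box
`{r₁,...,r₁+ℓ₁−1} × {r₂,...,r₂+ℓ₂−1}` and it acts nontrivially at some site on each
of the four edges of the box. -/
def IsSupportedAt (A : Site L → PauliOp) (r : Site L) (ℓ₁ ℓ₂ : ℕ) : Prop :=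
  (∀ p : Site L, A p ≠ PauliOp.I →
      (∃ n : ℕ, n < ℓ₁ ∧ p.1 = r.1 + (n : ZMod L)) ∧
      (∃ n : ℕ, n < ℓ₂ ∧ p.2 = r.2 + (n : ZMod L))) ∧
  (∃ p : Site L, A p ≠ PauliOp.I ∧ p.1 = r.1) ∧
  (∃ p : Site L, A p ≠ PauliOp.I ∧ p.1 = r.1 + ((ℓ₁ - 1 : ℕ) : ZMod L)) ∧
  (∃ p : Site L, A p ≠ PauliOp.I ∧ p.2 = r.2) ∧
  (∃ p : Site L, A p ≠ PauliOp.I ∧ p.2 = r.2 + ((ℓ₂ - 1 : ℕ) : ZMod L))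

/-- `A` is an `(ℓ₁,ℓ₂)`-support Pauli product. -/
def IsSupportOp (ℓ₁ ℓ₂ : ℕ) (A : Site L → PauliOp) : Prop :=
  ∃ r : Site L, IsSupportedAt A r ℓ₁ ℓ₂

/-- `Q` is a `(k₁,k₂)`-local conserved quantity: it commutes with `H`, it is a linear
combination of `(ℓ₁,ℓ₂)`-support Pauli products with `ℓ₁ ≤ k₁`, `ℓ₂ ≤ k₂`, and the
maximal `ℓ₁` (resp. `ℓ₂`) occurring with nonzero coefficient equals `k₁` (resp. `k₂`). -/
def IsLocalConserved [NeZero L] (J1 J2 hx hz : ℝ) (k₁ k₂ : ℕ)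
    (Q : Matrix (Site L → Fin 2) (Site L → Fin 2) ℂ) : Prop :=
  Q * ham (L := L) J1 J2 hx hz = ham (L := L) J1 J2 hx hz * Q ∧
  (∀ A, coeff Q A ≠ 0 → ∃ ℓ₁ ℓ₂ : ℕ, ℓ₁ ≤ k₁ ∧ ℓ₂ ≤ k₂ ∧ IsSupportOp ℓ₁ ℓ₂ A) ∧
  (∃ A ℓ₂, coeff Q A ≠ 0 ∧ ℓ₂ ≤ k₂ ∧ IsSupportOp k₁ ℓ₂ A) ∧
  (∃ A ℓ₁, coeff Q A ≠ 0 ∧ ℓ₁ ≤ k₁ ∧ IsSupportOp ℓ₁ k₂ A)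

/-- `Q` is a `k₁`-candidate: it commutes with `H` and is a linear combination of
`(ℓ₁,ℓ₂)`-support Pauli products with `ℓ₁ ≤ k₁` (`ℓ₂ ≤ L` arbitrary). -/
def IsCandidate [NeZero L] (J1 J2 hx hz : ℝ) (k₁ : ℕ)
    (Q : Matrix (Site L → Fin 2) (Site L → Fin 2) ℂ) : Prop :=
  Q * ham (L := L) J1 J2 hx hz = ham (L := L) J1 J2 hx hz * Q ∧
  ∀ A, coeff Q A ≠ 0 → ∃ ℓ₁ ℓ₂ : ℕ, ℓ₁ ≤ k₁ ∧ ℓ₂ ≤ L ∧ IsSupportOp ℓ₁ ℓ₂ A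

/-- First coordinate of the upper edge of a box cornered at `r`. -/
def upperEdge (r : Site L) : ZMod L := r.1

/-- First coordinate of the lower edge of a box cornered at `r` with height `ℓ₁`. -/
def lowerEdge (r : Site L) (ℓ₁ : ℕ) : ZMod L := r.1 + ((ℓ₁ - 1 : ℕ) : ZMod L)

/-- `A` contains `X` or `Y` at some site with first coordinate `a`. -/
def HasXYOn (A : Site L → PauliOp) (a : ZMod L) : Prop :=
  ∃ p : Site L, p.1 = a ∧ (A p = PauliOp.X ∨ A p = PauliOp.Y)

/-- Every operator of `A` at sites with first coordinate `a` is `Z` or `I`. -/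
def AllZIOn (A : Site L → PauliOp) (a : ZMod L) : Prop :=
  ∀ p : Site L, p.1 = a → A p = PauliOp.Z ∨ A p = PauliOp.I

/-- `A` carries at least two `Z`'s on the line with first coordinate `a`. -/
def TwoZOn (A : Site L → PauliOp) (a : ZMod L) : Prop :=
  ∃ p q : Site L, p ≠ q ∧ p.1 = a ∧ q.1 = a ∧ A p = PauliOp.Z ∧ A q = PauliOp.Z

/-- `A` carries exactly one `Z` on the line with first coordinate `a`. -/
def OneZOn (A : Site L → PauliOp) (a : ZMod L) : Prop :=
  ∃! p : Site L, p.1 = a ∧ A p = PauliOp.Z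

/-- The single-column Pauli product with `P` at site `r`, `R` at site `r+(k−1)e₁`,
`X` at sites `r+n e₁` for `n = 1,...,k−2`, and `I` elsewhere. -/
noncomputable def colPQ (P R : PauliOp) (k : ℕ) (r : Site L) : Site L → PauliOp :=
  fun p =>
    if p = r then P
    else if p = (r.1 + ((k - 1 : ℕ) : ZMod L), r.2) then R
    else if ∃ n : ℕ, 1 ≤ n ∧ n ≤ k - 2 ∧ p = (r.1 + (n : ZMod L), r.2) then PauliOp.X
    else PauliOp.I



/-! ### Infrastructure: the Pauli group algebra -/

namespace PauliOp

/-- label of the product of two single-site Pauli operators -/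
def pmul : PauliOp → PauliOp → PauliOp
  | I, a => a
  | a, I => a
  | X, X => I
  | X, Y => Z
  | X, Z => Y
  | Y, X => Z
  | Y, Y => I
  | Y, Z => X
  | Z, X => Y
  | Z, Y => X
  | Z, Z => I

/-- phase of the product of two single-site Pauli operators -/
def phase : PauliOp → PauliOp → ℂ
  | X, Y => Complex.I
  | Y, X => -Complex.I
  | Y, Z => Complex.I
  | Z, Y => -Complex.I
  | Z, X => Complex.I
  | X, Z => -Complex.I
  | _, _ => 1

@[simp] lemma pmul_I_left (a : PauliOp) : pmul I a = a := by cases a <;> rfl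
@[simp] lemma pmul_I_right (a : PauliOp) : pmul a I = a := by cases a <;> rfl
@[simp] lemma phase_I_left (a : PauliOp) : phase I a = 1 := by cases a <;> rfl
@[simp] lemma phase_I_right (a : PauliOp) : phase a I = 1 := by cases a <;> rfl

lemma pmul_comm (a b : PauliOp) : pmul a b = pmul b a := by cases a <;> cases b <;> rfl

lemma pauliMat_mul (a b : PauliOp) :
    pauliMat a * pauliMat b = phase a b • pauliMat (pmul a b) := by
  cases a <;> cases b <;>
    · ext i j
      fin_cases i <;> fin_cases j <;>
        simp [pauliMat, phase, pmul, Matrix.mul_apply, Fin.sum_univ_two, Matrix.one_apply,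
          Complex.ext_iff]

lemma ne_I_of_XY {a : PauliOp} (h : a = X ∨ a = Y) : a ≠ I := by
  rcases h with h | h <;> subst h <;> intro hI <;> cases hI

lemma pmul_XY_ZI {a b : PauliOp} (ha : a = X ∨ a = Y) (hb : b = Z ∨ b = I) :
    pmul a b = X ∨ pmul a b = Y := by
  rcases ha with ha | ha <;> rcases hb with hb | hb <;> subst ha <;> subst hb <;> simp [pmul]

end PauliOp

open PauliOp

/-! ### Products of Pauli products -/

/-- pointwise product of the labels of two Pauli products -/
def pmg (A B : Site L → PauliOp) : Site L → PauliOp := fun p => pmul (A p) (B p)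

/-- total phase of a product of two Pauli products -/
noncomputable def pph [NeZero L] (A B : Site L → PauliOp) : ℂ :=
  ∏ p : Site L, phase (A p) (B p)

@[simp] lemma pmg_apply (A B : Site L → PauliOp) (p : Site L) :
    pmg A B p = pmul (A p) (B p) := rfl

lemma pmg_comm (A B : Site L → PauliOp) : pmg A B = pmg B A := by
  funext p; exact pmul_comm _ _

lemma pauliProd_mul [NeZero L] (A B : Site L → PauliOp) :
    pauliProd A * pauliProd B = pph A B • pauliProd (pmg A B) := by
  ext s t
  simp only [Matrix.mul_apply, pauliProd, Matrix.smul_apply, smul_eq_mul, pph, pmg]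
  have h2 : ∀ p : Site L, (∑ x : Fin 2, pauliMat (A p) (s p) x * pauliMat (B p) x (t p))
      = phase (A p) (B p) * pauliMat (pmul (A p) (B p)) (s p) (t p) := by
    intro p
    have := congrFun (congrFun (pauliMat_mul (A p) (B p)) (s p)) (t p)
    simpa [Matrix.mul_apply, Matrix.smul_apply] using this
  have key := Finset.prod_univ_sum (fun _ : Site L => (Finset.univ : Finset (Fin 2)))
      (fun p x => pauliMat (A p) (s p) x * pauliMat (B p) x (t p))
  rw [Fintype.piFinset_univ] at key
  calc ∑ w : Site L → Fin 2,
        (∏ p : Site L, pauliMat (A p) (s p) (w p)) * ∏ p : Site L, pauliMat (B p) (w p) (t p)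
      = ∑ w : Site L → Fin 2,
          ∏ p : Site L, pauliMat (A p) (s p) (w p) * pauliMat (B p) (w p) (t p) := by
        refine Finset.sum_congr rfl fun w _ => ?_
        rw [← Finset.prod_mul_distrib]
    _ = ∏ p : Site L, ∑ x : Fin 2, pauliMat (A p) (s p) x * pauliMat (B p) x (t p) :=
        key.symm
    _ = ∏ p : Site L, phase (A p) (B p) * pauliMat (pmul (A p) (B p)) (s p) (t p) :=
        Finset.prod_congr rfl (fun p _ => h2 p)
    _ = (∏ p : Site L, phase (A p) (B p))
          * ∏ p : Site L, pauliMat (pmul (A p) (B p)) (s p) (t p) :=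
        Finset.prod_mul_distrib

lemma coeff_smul [NeZero L] (c : ℂ) (M : Matrix (Site L → Fin 2) (Site L → Fin 2) ℂ) (A) :
    coeff (c • M) A = c * coeff M A := by
  simp [coeff, Matrix.mul_smul, mul_div_assoc]

lemma coeff_add [NeZero L] (M N : Matrix (Site L → Fin 2) (Site L → Fin 2) ℂ) (A) :
    coeff (M + N) A = coeff M A + coeff N A := by
  simp [coeff, Matrix.mul_add, Matrix.trace_add, add_div]

lemma coeff_sum [NeZero L] {ι : Type*} (s : Finset ι)
    (M : ι → Matrix (Site L → Fin 2) (Site L → Fin 2) ℂ) (A) :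
    coeff (∑ i ∈ s, M i) A = ∑ i ∈ s, coeff (M i) A := by
  simp [coeff, Matrix.mul_sum, Matrix.trace_sum, Finset.sum_div]

/-- coefficient of a commutator with a single Pauli term -/
lemma coeff_comm_term [NeZero L] (Q : Matrix (Site L → Fin 2) (Site L → Fin 2) ℂ)
    (B h : Site L → PauliOp) :
    coeff (Q * pauliProd h - pauliProd h * Q) B
      = (pph h B - pph B h) * coeff Q (pmg B h) := by
  have e1 : Matrix.trace (pauliProd B * (Q * pauliProd h))
      = pph h B * Matrix.trace (pauliProd (pmg B h) * Q) := by
    rw [← Matrix.mul_assoc, Matrix.trace_mul_comm, ← Matrix.mul_assoc, pauliProd_mul,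
      pmg_comm B h]
    simp [Matrix.smul_mul, mul_comm]
  have e2 : Matrix.trace (pauliProd B * (pauliProd h * Q))
      = pph B h * Matrix.trace (pauliProd (pmg B h) * Q) := by
    rw [← Matrix.mul_assoc, pauliProd_mul]
    simp [Matrix.smul_mul, mul_comm]
  simp only [coeff, Matrix.mul_sub, Matrix.trace_sub, e1, e2]
  ring

/-! ### The four families of terms in the Hamiltonian -/

/-- vertical `ZZ` term -/
def vT (r : Site L) : Site L → PauliOp := twoSiteZZ r (r.1 + 1, r.2)
/-- horizontal `ZZ` term -/
def hT (r : Site L) : Site L → PauliOp := twoSiteZZ r (r.1, r.2 + 1)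
/-- transverse field term -/
def xT (r : Site L) : Site L → PauliOp := singleSite r PauliOp.X
/-- longitudinal field term -/
def zT (r : Site L) : Site L → PauliOp := singleSite r PauliOp.Z

/-- the antisymmetrized phase appearing in commutators -/
noncomputable def dd [NeZero L] (h B : Site L → PauliOp) : ℂ := pph h B - pph B h

/-- The master equation: the coefficient of `[Q,H]` on any Pauli product vanishes. -/
lemma master [NeZero L] (J1 J2 hx hz : ℝ) (Q : Matrix (Site L → Fin 2) (Site L → Fin 2) ℂ)
    (hcomm : Q * ham (L := L) J1 J2 hx hz = ham (L := L) J1 J2 hx hz * Q)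
    (B : Site L → PauliOp) :
    ∑ r : Site L, ((J1 : ℂ) * (dd (vT r) B * coeff Q (pmg B (vT r)))
      + (J2 : ℂ) * (dd (hT r) B * coeff Q (pmg B (hT r)))
      + (hx : ℂ) * (dd (xT r) B * coeff Q (pmg B (xT r)))
      + (hz : ℂ) * (dd (zT r) B * coeff Q (pmg B (zT r)))) = 0 := by
  have hexp : Q * ham (L := L) J1 J2 hx hz - ham (L := L) J1 J2 hx hz * Q
      = ∑ r : Site L, ((J1 : ℂ) • (Q * pauliProd (vT r) - pauliProd (vT r) * Q)
        + (J2 : ℂ) • (Q * pauliProd (hT r) - pauliProd (hT r) * Q)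
        + (hx : ℂ) • (Q * pauliProd (xT r) - pauliProd (xT r) * Q)
        + (hz : ℂ) • (Q * pauliProd (zT r) - pauliProd (zT r) * Q)) := by
    rw [ham, Finset.mul_sum, Finset.sum_mul, ← Finset.sum_sub_distrib]
    refine Finset.sum_congr rfl fun r _ => ?_
    simp only [vT, hT, xT, zT, mul_add, add_mul, mul_smul_comm, smul_mul_assoc, smul_sub]
    abel
  have h0 : Q * ham (L := L) J1 J2 hx hz - ham (L := L) J1 J2 hx hz * Q = 0 := by
    rw [hcomm, sub_self]
  have hc : coeff (Q * ham (L := L) J1 J2 hx hz - ham (L := L) J1 J2 hx hz * Q) B = 0 := by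
    rw [h0]; simp [coeff]
  rw [hexp, coeff_sum] at hc
  rw [← hc]
  refine Finset.sum_congr rfl fun r _ => ?_
  rw [coeff_add, coeff_add, coeff_add, coeff_smul, coeff_smul, coeff_smul, coeff_smul,
    coeff_comm_term, coeff_comm_term, coeff_comm_term, coeff_comm_term]
  simp only [dd]

/-! ### Site and row bookkeeping over `ZMod L` -/

lemma cast_row_inj [NeZero L] {i j : ℕ} (hi : i < L) (hj : j < L) {u : ZMod L}
    (h : u + (i : ZMod L) = u + (j : ZMod L)) : i = j := by
  have h2 : (i : ZMod L) = (j : ZMod L) := by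
    have := add_left_cancel h; exact this
  have h3 := (ZMod.natCast_eq_natCast_iff i j L).1 h2
  simpa [Nat.ModEq, Nat.mod_eq_of_lt hi, Nat.mod_eq_of_lt hj] using h3

lemma row_ne [NeZero L] {i j : ℕ} (hi : i < L) (hj : j < L) (hij : i ≠ j) (u : ZMod L) :
    u + (i : ZMod L) ≠ u + (j : ZMod L) := fun e => hij (cast_row_inj hi hj e)

lemma exists_off [NeZero L] (u a : ZMod L) : ∃ n : ℕ, n < L ∧ a = u + (n : ZMod L) :=
  ⟨(a - u).val, ZMod.val_lt _, by rw [ZMod.natCast_rightInverse (a - u)]; ring⟩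

lemma site_ne_row {p q : Site L} (h : p.1 ≠ q.1) : p ≠ q :=
  fun e => h (congrArg Prod.fst e)

lemma site_ne_col {p q : Site L} (h : p.2 ≠ q.2) : p ≠ q :=
  fun e => h (congrArg Prod.snd e)

lemma castLm1 [NeZero L] : ((L - 1 : ℕ) : ZMod L) = -1 := by
  have hL : 1 ≤ L := NeZero.one_le
  rw [Nat.cast_sub hL, ZMod.natCast_self]
  push_cast
  ring

lemma castKm1 [NeZero L] {k : ℕ} (hk : 1 ≤ k) : ((k - 1 : ℕ) : ZMod L) = (k : ZMod L) - 1 := by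
  rw [Nat.cast_sub hk]
  push_cast
  ring

/-! ### Values of the term label functions -/

lemma twoSiteZZ_val (r s p : Site L) : twoSiteZZ r s p = PauliOp.Z ∨ twoSiteZZ r s p = PauliOp.I := by
  unfold twoSiteZZ; split <;> simp

lemma twoSiteZZ_left (r s : Site L) : twoSiteZZ r s r = PauliOp.Z := by
  unfold twoSiteZZ; rw [if_pos (Or.inl rfl)]

lemma twoSiteZZ_right (r s : Site L) : twoSiteZZ r s s = PauliOp.Z := by
  unfold twoSiteZZ; rw [if_pos (Or.inr rfl)]

lemma twoSiteZZ_ne {r s p : Site L} (h1 : p ≠ r) (h2 : p ≠ s) : twoSiteZZ r s p = PauliOp.I := by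
  unfold twoSiteZZ; rw [if_neg]; rintro (h | h) <;> [exact h1 h; exact h2 h]

lemma singleSite_self (r : Site L) (P : PauliOp) : singleSite r P r = P := by
  unfold singleSite; rw [if_pos rfl]

lemma singleSite_ne {r p : Site L} (P : PauliOp) (h : p ≠ r) : singleSite r P p = PauliOp.I := by
  unfold singleSite; rw [if_neg h]

lemma singleSiteZ_val (r p : Site L) :
    singleSite r PauliOp.Z p = PauliOp.Z ∨ singleSite r PauliOp.Z p = PauliOp.I := by
  unfold singleSite; split <;> simp

lemma twoSiteZZ_ne_I {r s p : Site L} (h : twoSiteZZ r s p ≠ PauliOp.I) : p = r ∨ p = s := by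
  by_contra hc
  push_neg at hc
  exact h (twoSiteZZ_ne hc.1 hc.2)

lemma singleSite_ne_I {r p : Site L} {P : PauliOp} (h : singleSite r P p ≠ PauliOp.I) : p = r := by
  by_contra hc
  exact h (singleSite_ne _ hc)

/-! ### Vanishing criteria for the antisymmetrized phases -/

lemma pph_single_left [NeZero L] (r : Site L) (P : PauliOp) (B : Site L → PauliOp) :
    pph (singleSite r P) B = phase P (B r) := by
  unfold pph
  rw [Finset.prod_eq_single r]
  · rw [singleSite_self]
  · intro p _ hp; rw [singleSite_ne _ hp, phase_I_left]
  · intro h; exact absurd (Finset.mem_univ r) h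

lemma pph_single_right [NeZero L] (r : Site L) (P : PauliOp) (B : Site L → PauliOp) :
    pph B (singleSite r P) = phase (B r) P := by
  unfold pph
  rw [Finset.prod_eq_single r]
  · rw [singleSite_self]
  · intro p _ hp; rw [singleSite_ne _ hp, phase_I_right]
  · intro h; exact absurd (Finset.mem_univ r) h

lemma pph_two_left [NeZero L] {r s : Site L} (hrs : r ≠ s) (B : Site L → PauliOp) :
    pph (twoSiteZZ r s) B = phase PauliOp.Z (B r) * phase PauliOp.Z (B s) := by
  unfold pph
  have h1 : ∀ p ∈ (Finset.univ : Finset (Site L)), p ∉ ({r, s} : Finset (Site L)) →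
      phase (twoSiteZZ r s p) (B p) = 1 := by
    intro p _ hp
    simp only [Finset.mem_insert, Finset.mem_singleton, not_or] at hp
    rw [twoSiteZZ_ne hp.1 hp.2, phase_I_left]
  rw [← Finset.prod_subset (Finset.subset_univ ({r, s} : Finset (Site L))) h1,
    Finset.prod_pair hrs, twoSiteZZ_left, twoSiteZZ_right]

lemma pph_two_right [NeZero L] {r s : Site L} (hrs : r ≠ s) (B : Site L → PauliOp) :
    pph B (twoSiteZZ r s) = phase (B r) PauliOp.Z * phase (B s) PauliOp.Z := by
  unfold pph
  have h1 : ∀ p ∈ (Finset.univ : Finset (Site L)), p ∉ ({r, s} : Finset (Site L)) →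
      phase (B p) (twoSiteZZ r s p) = 1 := by
    intro p _ hp
    simp only [Finset.mem_insert, Finset.mem_singleton, not_or] at hp
    rw [twoSiteZZ_ne hp.1 hp.2, phase_I_right]
  rw [← Finset.prod_subset (Finset.subset_univ ({r, s} : Finset (Site L))) h1,
    Finset.prod_pair hrs, twoSiteZZ_left, twoSiteZZ_right]

lemma dd_two_zero [NeZero L] {r s : Site L} (hrs : r ≠ s) {B : Site L → PauliOp}
    (hr : B r = PauliOp.Z ∨ B r = PauliOp.I) (hs : B s = PauliOp.Z ∨ B s = PauliOp.I) :
    dd (twoSiteZZ r s) B = 0 := by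
  unfold dd
  rw [pph_two_left hrs, pph_two_right hrs]
  rcases hr with h | h <;> rcases hs with h' | h' <;> rw [h, h'] <;> norm_num [phase]

lemma dd_single_zero_I [NeZero L] {r : Site L} {B : Site L → PauliOp} (P : PauliOp)
    (h : B r = PauliOp.I) : dd (singleSite r P) B = 0 := by
  unfold dd
  rw [pph_single_left, pph_single_right, h, phase_I_left, phase_I_right, sub_self]

lemma dd_single_zero_same [NeZero L] {r : Site L} {B : Site L → PauliOp} (P : PauliOp)
    (h : B r = P) : dd (singleSite r P) B = 0 := by
  unfold dd
  rw [pph_single_left, pph_single_right, h]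
  cases P <;> norm_num [phase]


/-! ### Support-based vanishing of coefficients -/

/-- If a Pauli product acts nontrivially on two sites whose rows differ by exactly `k₁`,
then its coefficient in any `k₁`-candidate vanishes. -/
lemma supp_kill [NeZero L] {J1 J2 hx hz : ℝ} {k₁ : ℕ}
    {Q : Matrix (Site L → Fin 2) (Site L → Fin 2) ℂ}
    (hQ : IsCandidate J1 J2 hx hz k₁ Q) (hk₁ : 2 ≤ k₁) (hkL : 2 * k₁ ≤ L)
    (M : Site L → PauliOp) (s t : Site L)
    (hs : M s ≠ PauliOp.I) (ht : M t ≠ PauliOp.I)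
    (hst : t.1 = s.1 + (k₁ : ZMod L)) : coeff Q M = 0 := by
  by_contra hc
  obtain ⟨ℓ₁, ℓ₂, hℓ₁, -, rb, hbox⟩ := hQ.2 M hc
  obtain ⟨⟨ns, hns, hs1⟩, -⟩ := hbox.1 s hs
  obtain ⟨⟨nt, hnt, ht1⟩, -⟩ := hbox.1 t ht
  have he : rb.1 + (nt : ZMod L) = rb.1 + ((ns + k₁ : ℕ) : ZMod L) := by
    rw [← ht1, hst, hs1]
    push_cast
    ring
  have h1 : nt = ns + k₁ :=
    cast_row_inj (by omega) (by omega) he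
  omega


/-! ### The kill rule -/

/-- If `D` is supported in the rows `u, …, u+k₁−1` and carries `X` or `Y` both at a site
`pm` of the row `u` and at a site `py` of the row `u+k₁−1`, then its coefficient in a
`k₁`-candidate vanishes (for `J¹ ≠ 0`). -/
lemma killUp [NeZero L] {J1 J2 hx hz : ℝ} {k₁ : ℕ}
    {Q : Matrix (Site L → Fin 2) (Site L → Fin 2) ℂ}
    (hQ : IsCandidate J1 J2 hx hz k₁ Q) (hJ1 : J1 ≠ 0) (hk₁ : 2 ≤ k₁) (hkL : 2 * k₁ ≤ L)
    (D : Site L → PauliOp) (u : ZMod L) (pm py : Site L)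
    (hsup : ∀ p, D p ≠ PauliOp.I → ∃ n, n < k₁ ∧ p.1 = u + (n : ZMod L))
    (hpm1 : pm.1 = u) (hpmXY : D pm = PauliOp.X ∨ D pm = PauliOp.Y)
    (hpy1 : py.1 = u + ((k₁ - 1 : ℕ) : ZMod L))
    (hpyXY : D py = PauliOp.X ∨ D py = PauliOp.Y) :
    coeff Q D = 0 := by
  haveI : Fact (1 < L) := ⟨by omega⟩
  have hcol : ∀ v : ZMod L, v ≠ v + 1 := by
    intro v e
    exact one_ne_zero (left_eq_add.mp e)
  have rne : ∀ {i j : ℕ}, i < L → j < L → i ≠ j → u + (i : ZMod L) ≠ u + (j : ZMod L) :=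
    fun hi hj hij => row_ne hi hj hij u
  -- D vanishes off the window of rows
  have hDI : ∀ (p : Site L) (n : ℕ), n < L → p.1 = u + (n : ZMod L) → k₁ ≤ n →
      D p = PauliOp.I := by
    intro p n hn h1 h2
    by_contra hne
    obtain ⟨n', hn', h1'⟩ := hsup p hne
    have he : u + (n : ZMod L) = u + (n' : ZMod L) := by rw [← h1, h1']
    have := cast_row_inj hn (by omega) he
    omega
  set r₀ : Site L := (u + ((L - 1 : ℕ) : ZMod L), pm.2) with hr₀def
  have hr₀1 : r₀.1 = u + ((L - 1 : ℕ) : ZMod L) := by rw [hr₀def]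
  set B : Site L → PauliOp := fun p =>
    if p = r₀ then PauliOp.Z else if p = pm then pmul (D pm) PauliOp.Z else D p with hBdef
  have hpmrow : pm.1 = u + ((0 : ℕ) : ZMod L) := by rw [hpm1]; simp
  have hpm_ne_r₀ : pm ≠ r₀ := site_ne_row (by
    rw [hpmrow, hr₀1]; exact rne (by omega) (by omega) (by omega))
  have hpy_ne_r₀ : py ≠ r₀ := site_ne_row (by
    rw [hpy1, hr₀1]; exact rne (by omega) (by omega) (by omega))
  have hpy_ne_pm : py ≠ pm := site_ne_row (by
    rw [hpy1, hpmrow]; exact rne (by omega) (by omega) (by omega))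
  have hBr₀ : B r₀ = PauliOp.Z := by rw [hBdef]; simp
  have hBpm : B pm = pmul (D pm) PauliOp.Z := by rw [hBdef]; simp [hpm_ne_r₀]
  have hBelse : ∀ p, p ≠ r₀ → p ≠ pm → B p = D p := by
    intro p h1 h2; rw [hBdef]; simp [h1, h2]
  have hBpy : B py = D py := hBelse py hpy_ne_r₀ hpy_ne_pm
  have hSUPP := supp_kill hQ hk₁ hkL
  have harith : ∀ v : Site L, v.1 = u + ((L - 1 : ℕ) : ZMod L) →
      py.1 = v.1 + (k₁ : ZMod L) := by
    intro v hv
    rw [hpy1, hv, castLm1, castKm1 (by omega : 1 ≤ k₁)]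
    ring
  -- the unified kill for terms not touching `r₀`
  have killH : ∀ h : Site L → PauliOp, h r₀ = PauliOp.I →
      (h py = PauliOp.Z ∨ h py = PauliOp.I) → coeff Q (pmg B h) = 0 := by
    intro h hh1 hh2
    refine hSUPP _ r₀ py ?_ ?_ (harith r₀ hr₀1)
    · rw [pmg_apply, hh1, pmul_I_right, hBr₀]; simp
    · rw [pmg_apply, hBpy]; exact ne_I_of_XY (pmul_XY_ZI hpyXY hh2)
  have hM := master J1 J2 hx hz Q hQ.1 B
  have hzero : ∀ r : Site L, r ≠ r₀ →
      ((J1 : ℂ) * (dd (vT r) B * coeff Q (pmg B (vT r)))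
        + (J2 : ℂ) * (dd (hT r) B * coeff Q (pmg B (hT r)))
        + (hx : ℂ) * (dd (xT r) B * coeff Q (pmg B (xT r)))
        + (hz : ℂ) * (dd (zT r) B * coeff Q (pmg B (zT r)))) = 0 := by
    intro r hr
    obtain ⟨n, hnL, han⟩ := exists_off u r.1
    have e2nd : (r.1 + 1) = u + (((n + 1 : ℕ)) : ZMod L) := by rw [han]; push_cast; ring
    by_cases hcA : n < k₁
    · -- rows inside the window
      have hr₀r : r₀ ≠ r := site_ne_row (by
        rw [hr₀1, han]; exact rne (by omega) (by omega) (by omega))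
      have hr₀r1 : r₀ ≠ ((r.1 + 1 : ZMod L), r.2) := site_ne_row (by
        rw [hr₀1, e2nd]; exact rne (by omega) (by omega) (by omega))
      have hr₀r2 : r₀ ≠ ((r.1 : ZMod L), r.2 + 1) := site_ne_row (by
        rw [hr₀1, han]; exact rne (by omega) (by omega) (by omega))
      have c1 : coeff Q (pmg B (vT r)) = 0 :=
        killH _ (twoSiteZZ_ne hr₀r hr₀r1) (twoSiteZZ_val _ _ _)
      have c2 : coeff Q (pmg B (hT r)) = 0 :=
        killH _ (twoSiteZZ_ne hr₀r hr₀r2) (twoSiteZZ_val _ _ _)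
      have c4 : coeff Q (pmg B (zT r)) = 0 :=
        killH _ (singleSite_ne _ hr₀r) (singleSiteZ_val _ _)
      have e3 : (hx : ℂ) * (dd (xT r) B * coeff Q (pmg B (xT r))) = 0 := by
        by_cases hrpy : r = py
        · rcases hpyXY with hD | hD
          · have hdd : dd (xT r) B = 0 :=
              dd_single_zero_same PauliOp.X (by rw [hrpy, hBpy, hD])
            rw [hdd, zero_mul, mul_zero]
          · have c3 : coeff Q (pmg B (xT r)) = 0 := by
              refine hSUPP _ r₀ py ?_ ?_ (harith r₀ hr₀1)
              · rw [pmg_apply, xT, singleSite_ne _ hr₀r, pmul_I_right, hBr₀]; simp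
              · have hxpy : xT r py = PauliOp.X := by rw [xT, hrpy, singleSite_self]
                rw [pmg_apply, hBpy, hD, hxpy]; simp [pmul]
            rw [c3, mul_zero, mul_zero]
        · have c3 : coeff Q (pmg B (xT r)) = 0 :=
            killH _ (singleSite_ne _ hr₀r)
              (Or.inr (singleSite_ne _ (fun e => hrpy e.symm)))
          rw [c3, mul_zero, mul_zero]
      rw [c1, c2, c4, e3, mul_zero, mul_zero, mul_zero, mul_zero, mul_zero]
      ring
    · by_cases hcB : n = L - 1
      · -- the row of `r₀`, but `r ≠ r₀`
        have hrpm : r ≠ pm := site_ne_row (by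
          rw [han, hpmrow]; exact rne (by omega) (by omega) (by omega))
        have hBr : B r = PauliOp.I := by
          rw [hBelse r hr hrpm]; exact hDI r n hnL han (by omega)
        have e2nd0 : (r.1 + 1) = u + ((0 : ℕ) : ZMod L) := by
          rw [han, hcB, castLm1]; push_cast; ring
        have hpyr : py ≠ r := site_ne_row (by
          rw [hpy1, han]; exact rne (by omega) (by omega) (by omega))
        have hpyr1 : py ≠ ((r.1 + 1 : ZMod L), r.2) := site_ne_row (by
          rw [hpy1, e2nd0]; exact rne (by omega) (by omega) (by omega))
        have hpyr2 : py ≠ ((r.1 : ZMod L), r.2 + 1) := site_ne_row (by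
          rw [hpy1, han]; exact rne (by omega) (by omega) (by omega))
        have harithr : py.1 = r.1 + (k₁ : ZMod L) := harith r (by rw [han, hcB])
        have c1 : coeff Q (pmg B (vT r)) = 0 := by
          refine hSUPP _ r py ?_ ?_ harithr
          · rw [pmg_apply, hBr, vT, twoSiteZZ_left]; simp
          · rw [pmg_apply, hBpy, vT, twoSiteZZ_ne hpyr hpyr1, pmul_I_right]
            exact ne_I_of_XY hpyXY
        have c2 : coeff Q (pmg B (hT r)) = 0 := by
          refine hSUPP _ r py ?_ ?_ harithr
          · rw [pmg_apply, hBr, hT, twoSiteZZ_left]; simp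
          · rw [pmg_apply, hBpy, hT, twoSiteZZ_ne hpyr hpyr2, pmul_I_right]
            exact ne_I_of_XY hpyXY
        have c4 : coeff Q (pmg B (zT r)) = 0 := by
          refine hSUPP _ r py ?_ ?_ harithr
          · rw [pmg_apply, hBr, zT, singleSite_self]; simp
          · rw [pmg_apply, hBpy, zT, singleSite_ne _ hpyr, pmul_I_right]
            exact ne_I_of_XY hpyXY
        have e3 : dd (xT r) B = 0 := dd_single_zero_I PauliOp.X hBr
        rw [c1, c2, c4, e3, zero_mul, mul_zero, mul_zero, mul_zero, mul_zero, mul_zero]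
        ring
      · -- rows strictly outside the window
        have hrpm : r ≠ pm := site_ne_row (by
          rw [han, hpmrow]; exact rne (by omega) (by omega) (by omega))
        have hBr : B r = PauliOp.I := by
          rw [hBelse r hr hrpm]; exact hDI r n hnL han (by omega)
        have hrne1 : r ≠ ((r.1 + 1 : ZMod L), r.2) := site_ne_row (by
          show r.1 ≠ r.1 + 1
          rw [e2nd, han]; exact rne (by omega) (by omega) (by omega))
        have hrne2 : r ≠ ((r.1 : ZMod L), r.2 + 1) := site_ne_col (hcol r.2)
        have hB1 : B ((r.1 + 1 : ZMod L), r.2) = PauliOp.Z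
            ∨ B ((r.1 + 1 : ZMod L), r.2) = PauliOp.I := by
          by_cases hs : ((r.1 + 1 : ZMod L), r.2) = r₀
          · left; rw [hs, hBr₀]
          · right
            have hspm : ((r.1 + 1 : ZMod L), r.2) ≠ pm := site_ne_row (by
              show r.1 + 1 ≠ pm.1
              rw [e2nd, hpmrow]; exact rne (by omega) (by omega) (by omega))
            rw [hBelse _ hs hspm]; exact hDI _ (n + 1) (by omega) e2nd (by omega)
        have hB2 : B ((r.1 : ZMod L), r.2 + 1) = PauliOp.I := by
          have hs : ((r.1 : ZMod L), r.2 + 1) ≠ r₀ := site_ne_row (by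
            show r.1 ≠ r₀.1
            rw [han, hr₀1]; exact rne (by omega) (by omega) (by omega))
          have hspm : ((r.1 : ZMod L), r.2 + 1) ≠ pm := site_ne_row (by
            show r.1 ≠ pm.1
            rw [han, hpmrow]; exact rne (by omega) (by omega) (by omega))
          rw [hBelse _ hs hspm]; exact hDI _ n hnL han (by omega)
        have e1 : dd (vT r) B = 0 := dd_two_zero hrne1 (Or.inr hBr) hB1
        have e2 : dd (hT r) B = 0 := dd_two_zero hrne2 (Or.inr hBr) (Or.inr hB2)
        have e3 : dd (xT r) B = 0 := dd_single_zero_I PauliOp.X hBr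
        have e4 : dd (zT r) B = 0 := dd_single_zero_I PauliOp.Z hBr
        rw [e1, e2, e3, e4]
        ring
  rw [Finset.sum_eq_single_of_mem r₀ (Finset.mem_univ r₀) (fun r _ h => hzero r h)] at hM
  -- the surviving term at `r₀`
  have hsec : ((r₀.1 + 1 : ZMod L), r₀.2) = pm := by
    have h1 : r₀.1 + 1 = u := by rw [hr₀1, castLm1]; ring
    have h2 : r₀.2 = pm.2 := by rw [hr₀def]
    rw [h1, h2, ← hpm1]
  have hDr₀ : D r₀ = PauliOp.I := hDI r₀ (L - 1) (by omega) hr₀1 (by omega)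
  have hMeq : pmg B (vT r₀) = D := by
    funext p
    rw [pmg_apply]
    by_cases h1 : p = r₀
    · subst h1
      rw [hBr₀, vT, twoSiteZZ_left, hDr₀]; rfl
    · by_cases h2 : p = pm
      · rw [h2]
        have hval : vT r₀ pm = PauliOp.Z := by
          rw [vT, ← hsec]; exact twoSiteZZ_right _ _
        rw [hBpm, hval]
        rcases hpmXY with h | h <;> rw [h] <;> rfl
      · rw [hBelse p h1 h2, vT, twoSiteZZ_ne h1 (by rw [hsec]; exact h2), pmul_I_right]
  -- the other three components at `r₀` vanish
  have f2 : coeff Q (pmg B (hT r₀)) = 0 := by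
    have hs : ((r₀.1 : ZMod L), r₀.2 + 1) ≠ r₀ := site_ne_col (fun e => hcol r₀.2 e.symm)
    have hspm : ((r₀.1 : ZMod L), r₀.2 + 1) ≠ pm := site_ne_row (by
      show r₀.1 ≠ pm.1
      rw [hr₀1, hpmrow]; exact rne (by omega) (by omega) (by omega))
    have hpys : py ≠ ((r₀.1 : ZMod L), r₀.2 + 1) := site_ne_row (by
      show py.1 ≠ r₀.1
      rw [hpy1, hr₀1]; exact rne (by omega) (by omega) (by omega))
    refine hSUPP _ ((r₀.1 : ZMod L), r₀.2 + 1) py ?_ ?_ (harith _ rfl)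
    · rw [pmg_apply, hBelse _ hs hspm, hDI _ (L - 1) (by omega) rfl (by omega), hT,
        twoSiteZZ_right]
      simp
    · rw [pmg_apply, hBpy, hT, twoSiteZZ_ne hpy_ne_r₀ hpys, pmul_I_right]
      exact ne_I_of_XY hpyXY
  have f3 : coeff Q (pmg B (xT r₀)) = 0 := by
    refine hSUPP _ r₀ py ?_ ?_ (harith r₀ hr₀1)
    · rw [pmg_apply, hBr₀, xT, singleSite_self]; simp [pmul]
    · rw [pmg_apply, hBpy, xT, singleSite_ne _ hpy_ne_r₀, pmul_I_right]
      exact ne_I_of_XY hpyXY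
  have f4 : dd (zT r₀) B = 0 := dd_single_zero_same PauliOp.Z hBr₀
  rw [hMeq, f2, f3, f4] at hM
  have hvT : vT r₀ = twoSiteZZ r₀ pm := by rw [vT, hsec]
  have hr₀pm : r₀ ≠ pm := Ne.symm hpm_ne_r₀
  have hdd : dd (vT r₀) B ≠ 0 := by
    rw [hvT]
    unfold dd
    rw [pph_two_left hr₀pm, pph_two_right hr₀pm, hBr₀, hBpm]
    rcases hpmXY with h | h <;> rw [h] <;>
      simp [pmul, phase, sub_eq_zero, Complex.ext_iff] <;> norm_num
  have hJ1' : (J1 : ℂ) ≠ 0 := Complex.ofReal_ne_zero.2 hJ1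
  have hM' : (J1 : ℂ) * (dd (vT r₀) B * coeff Q D) = 0 := by
    rw [← hM]; ring
  rcases mul_eq_zero.1 hM' with h | h
  · exact absurd h hJ1'
  · rcases mul_eq_zero.1 h with h' | h'
    · exact absurd h' hdd
    · exact h'


/-! ### The main lemma, for a type ii-b operator whose `Z` edge is the lower edge -/

lemma main_up [NeZero L] {J1 J2 hx hz : ℝ} {k₁ : ℕ}
    {Q : Matrix (Site L → Fin 2) (Site L → Fin 2) ℂ}
    (hQ : IsCandidate J1 J2 hx hz k₁ Q) (hJ1 : J1 ≠ 0) (hhx : hx ≠ 0)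
    (hk₁ : 2 ≤ k₁) (hkL : 2 * k₁ ≤ L)
    (A : Site L → PauliOp) (u : ZMod L)
    (hsup : ∀ p, A p ≠ PauliOp.I → ∃ n, n < k₁ ∧ p.1 = u + (n : ZMod L))
    (q : Site L) (hq1 : q.1 = u + ((k₁ - 1 : ℕ) : ZMod L)) (hqZ : A q = PauliOp.Z)
    (px : Site L) (hpx1 : px.1 = u) (hpxX : A px = PauliOp.X) :
    coeff Q A = 0 := by
  haveI : Fact (1 < L) := ⟨by omega⟩
  have hcol : ∀ v : ZMod L, v ≠ v + 1 := by
    intro v e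
    exact one_ne_zero (left_eq_add.mp e)
  have rne : ∀ {i j : ℕ}, i < L → j < L → i ≠ j → u + (i : ZMod L) ≠ u + (j : ZMod L) :=
    fun hi hj hij => row_ne hi hj hij u
  have hpxrow : px.1 = u + ((0 : ℕ) : ZMod L) := by rw [hpx1]; simp
  have hq_ne_px : q ≠ px := site_ne_row (by
    rw [hq1, hpxrow]; exact rne (by omega) (by omega) (by omega))
  set C : Site L → PauliOp := fun p => if p = q then PauliOp.Y else A p with hCdef
  have hCq : C q = PauliOp.Y := by rw [hCdef]; simp
  have hCelse : ∀ p, p ≠ q → C p = A p := by intro p h1; rw [hCdef]; simp [h1]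
  have hCpx : C px = PauliOp.X := by rw [hCelse px (Ne.symm hq_ne_px)]; exact hpxX
  have hsupC : ∀ p, C p ≠ PauliOp.I → ∃ n, n < k₁ ∧ p.1 = u + (n : ZMod L) := by
    intro p hp
    by_cases h1 : p = q
    · exact ⟨k₁ - 1, by omega, by rw [h1]; exact hq1⟩
    · rw [hCelse p h1] at hp; exact hsup p hp
  have hCI : ∀ (p : Site L) (n : ℕ), n < L → p.1 = u + (n : ZMod L) → k₁ ≤ n →
      C p = PauliOp.I := by
    intro p n hn h1 h2
    by_contra hne
    obtain ⟨n', hn', h1'⟩ := hsupC p hne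
    have he : u + (n : ZMod L) = u + (n' : ZMod L) := by rw [← h1, h1']
    have := cast_row_inj hn (by omega) he
    omega
  have hSUPP := supp_kill hQ hk₁ hkL
  have killK : ∀ h : Site L → PauliOp,
      (∀ p, h p ≠ PauliOp.I → ∃ n, n < k₁ ∧ p.1 = u + (n : ZMod L)) →
      (h px = PauliOp.Z ∨ h px = PauliOp.I) →
      (h q = PauliOp.Z ∨ h q = PauliOp.I) →
      coeff Q (pmg C h) = 0 := by
    intro h hw hhpx hhq
    refine killUp hQ hJ1 hk₁ hkL (pmg C h) u px q ?_ hpx1 ?_ hq1 ?_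
    · intro p hp
      rw [pmg_apply] at hp
      by_cases hCp : C p = PauliOp.I
      · rw [hCp, pmul_I_left] at hp
        exact hw p hp
      · exact hsupC p hCp
    · rw [pmg_apply, hCpx]; exact pmul_XY_ZI (Or.inl rfl) hhpx
    · rw [pmg_apply, hCq]; exact pmul_XY_ZI (Or.inr rfl) hhq
  have hM := master J1 J2 hx hz Q hQ.1 C
  have hzero : ∀ r : Site L, r ≠ q →
      ((J1 : ℂ) * (dd (vT r) C * coeff Q (pmg C (vT r)))
        + (J2 : ℂ) * (dd (hT r) C * coeff Q (pmg C (hT r)))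
        + (hx : ℂ) * (dd (xT r) C * coeff Q (pmg C (xT r)))
        + (hz : ℂ) * (dd (zT r) C * coeff Q (pmg C (zT r)))) = 0 := by
    intro r hr
    obtain ⟨n, hnL, han⟩ := exists_off u r.1
    have e2nd : (r.1 + 1) = u + (((n + 1 : ℕ)) : ZMod L) := by rw [han]; push_cast; ring
    by_cases hcA : n < k₁
    · -- rows inside the window
      have c1 : coeff Q (pmg C (vT r)) = 0 := by
        by_cases hn1 : n + 1 < k₁
        · refine killK (vT r) ?_ (twoSiteZZ_val _ _ _) (twoSiteZZ_val _ _ _)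
          intro p hp
          rcases twoSiteZZ_ne_I hp with e | e
          · exact ⟨n, hcA, by rw [e]; exact han⟩
          · exact ⟨n + 1, hn1, by rw [e]; exact e2nd⟩
        · -- n = k₁ - 1 : extend below the window, kill by support
          have hnk : n + 1 = k₁ := by omega
          have hCsec : C ((r.1 + 1 : ZMod L), r.2) = PauliOp.I :=
            hCI _ (n + 1) (by omega) e2nd (by omega)
          have hpxr : px ≠ r := site_ne_row (by
            rw [hpxrow, han]; exact rne (by omega) (by omega) (by omega))
          have hpxr1 : px ≠ ((r.1 + 1 : ZMod L), r.2) := site_ne_row (by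
            rw [hpxrow, e2nd]; exact rne (by omega) (by omega) (by omega))
          refine hSUPP _ px ((r.1 + 1 : ZMod L), r.2) ?_ ?_ ?_
          · rw [pmg_apply, hCpx, vT, twoSiteZZ_ne hpxr hpxr1, pmul_I_right]; simp
          · rw [pmg_apply, hCsec, pmul_I_left, vT, twoSiteZZ_right]; simp
          · show r.1 + 1 = px.1 + (k₁ : ZMod L)
            rw [e2nd, hpxrow, hnk]; push_cast; ring
      have c2 : coeff Q (pmg C (hT r)) = 0 := by
        refine killK (hT r) ?_ (twoSiteZZ_val _ _ _) (twoSiteZZ_val _ _ _)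
        intro p hp
        rcases twoSiteZZ_ne_I hp with e | e
        · exact ⟨n, hcA, by rw [e]; exact han⟩
        · exact ⟨n, hcA, by rw [e]; exact han⟩
      have c4 : coeff Q (pmg C (zT r)) = 0 := by
        refine killK (zT r) ?_ (singleSiteZ_val _ _) (singleSiteZ_val _ _)
        intro p hp
        rw [singleSite_ne_I hp]
        exact ⟨n, hcA, han⟩
      have e3 : (hx : ℂ) * (dd (xT r) C * coeff Q (pmg C (xT r))) = 0 := by
        by_cases hrpx : r = px
        · have hdd : dd (xT r) C = 0 :=
            dd_single_zero_same PauliOp.X (by rw [hrpx, hCpx])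
          rw [hdd, zero_mul, mul_zero]
        · have c3 : coeff Q (pmg C (xT r)) = 0 := by
            refine killK (xT r) ?_
              (Or.inr (singleSite_ne _ (fun e => hrpx e.symm)))
              (Or.inr (singleSite_ne _ (fun e => hr e.symm)))
            intro p hp
            rw [singleSite_ne_I hp]
            exact ⟨n, hcA, han⟩
          rw [c3, mul_zero, mul_zero]
      rw [c1, c2, c4, e3, mul_zero, mul_zero, mul_zero, mul_zero, mul_zero]
      ring
    · by_cases hcB : n = L - 1
      · -- the row just above the window
        have hCr : C r = PauliOp.I := hCI r n hnL han (by omega)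
        have e2nd0 : (r.1 + 1) = u + ((0 : ℕ) : ZMod L) := by
          rw [han, hcB, castLm1]; push_cast; ring
        have hqr : q ≠ r := site_ne_row (by
          rw [hq1, han]; exact rne (by omega) (by omega) (by omega))
        have hqr1 : q ≠ ((r.1 + 1 : ZMod L), r.2) := site_ne_row (by
          rw [hq1, e2nd0]; exact rne (by omega) (by omega) (by omega))
        have hqr2 : q ≠ ((r.1 : ZMod L), r.2 + 1) := site_ne_row (by
          rw [hq1, han]; exact rne (by omega) (by omega) (by omega))
        have harithr : q.1 = r.1 + (k₁ : ZMod L) := by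
          rw [hq1, han, hcB, castLm1, castKm1 (by omega : 1 ≤ k₁)]
          ring
        have c1 : coeff Q (pmg C (vT r)) = 0 := by
          refine hSUPP _ r q ?_ ?_ harithr
          · rw [pmg_apply, hCr, vT, twoSiteZZ_left]; simp
          · rw [pmg_apply, hCq, vT, twoSiteZZ_ne hqr hqr1, pmul_I_right]; simp
        have c2 : coeff Q (pmg C (hT r)) = 0 := by
          refine hSUPP _ r q ?_ ?_ harithr
          · rw [pmg_apply, hCr, hT, twoSiteZZ_left]; simp
          · rw [pmg_apply, hCq, hT, twoSiteZZ_ne hqr hqr2, pmul_I_right]; simp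
        have c4 : coeff Q (pmg C (zT r)) = 0 := by
          refine hSUPP _ r q ?_ ?_ harithr
          · rw [pmg_apply, hCr, zT, singleSite_self]; simp
          · rw [pmg_apply, hCq, zT, singleSite_ne _ hqr, pmul_I_right]; simp
        have e3 : dd (xT r) C = 0 := dd_single_zero_I PauliOp.X hCr
        rw [c1, c2, c4, e3, zero_mul, mul_zero, mul_zero, mul_zero, mul_zero, mul_zero]
        ring
      · -- rows strictly outside the window
        have hCr : C r = PauliOp.I := hCI r n hnL han (by omega)
        have hrne1 : r ≠ ((r.1 + 1 : ZMod L), r.2) := site_ne_row (by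
          show r.1 ≠ r.1 + 1
          rw [e2nd, han]; exact rne (by omega) (by omega) (by omega))
        have hrne2 : r ≠ ((r.1 : ZMod L), r.2 + 1) := site_ne_col (hcol r.2)
        have hC1 : C ((r.1 + 1 : ZMod L), r.2) = PauliOp.I :=
          hCI _ (n + 1) (by omega) e2nd (by omega)
        have hC2 : C ((r.1 : ZMod L), r.2 + 1) = PauliOp.I := hCI _ n hnL han (by omega)
        have e1 : dd (vT r) C = 0 := dd_two_zero hrne1 (Or.inr hCr) (Or.inr hC1)
        have e2 : dd (hT r) C = 0 := dd_two_zero hrne2 (Or.inr hCr) (Or.inr hC2)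
        have e3 : dd (xT r) C = 0 := dd_single_zero_I PauliOp.X hCr
        have e4 : dd (zT r) C = 0 := dd_single_zero_I PauliOp.Z hCr
        rw [e1, e2, e3, e4]
        ring
  rw [Finset.sum_eq_single_of_mem q (Finset.mem_univ q) (fun r _ h => hzero r h)] at hM
  -- the surviving term at `q`
  have hMeq : pmg C (xT q) = A := by
    funext p
    rw [pmg_apply]
    by_cases h1 : p = q
    · rw [h1, hCq, xT, singleSite_self, hqZ]; rfl
    · rw [hCelse p h1, xT, singleSite_ne _ h1, pmul_I_right]
  -- the other three components at `q` vanish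
  have e2ndq : (q.1 + 1) = u + ((k₁ : ℕ) : ZMod L) := by
    rw [hq1, castKm1 (by omega : 1 ≤ k₁)]; push_cast; ring
  have f1 : coeff Q (pmg C (vT q)) = 0 := by
    have hCsec : C ((q.1 + 1 : ZMod L), q.2) = PauliOp.I :=
      hCI _ k₁ (by omega) e2ndq (le_refl _)
    have hpxq : px ≠ q := Ne.symm hq_ne_px
    have hpxq1 : px ≠ ((q.1 + 1 : ZMod L), q.2) := site_ne_row (by
      rw [hpxrow, e2ndq]; exact rne (by omega) (by omega) (by omega))
    refine hSUPP _ px ((q.1 + 1 : ZMod L), q.2) ?_ ?_ ?_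
    · rw [pmg_apply, hCpx, vT, twoSiteZZ_ne hpxq hpxq1, pmul_I_right]; simp
    · rw [pmg_apply, hCsec, pmul_I_left, vT, twoSiteZZ_right]; simp
    · show q.1 + 1 = px.1 + (k₁ : ZMod L)
      rw [e2ndq, hpxrow]; push_cast; ring
  have f2 : coeff Q (pmg C (hT q)) = 0 := by
    refine killK (hT q) ?_ ?_ (Or.inl (twoSiteZZ_left _ _))
    · intro p hp
      rcases twoSiteZZ_ne_I hp with e | e
      · exact ⟨k₁ - 1, by omega, by rw [e]; exact hq1⟩
      · exact ⟨k₁ - 1, by omega, by rw [e]; exact hq1⟩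
    · refine Or.inr (twoSiteZZ_ne (Ne.symm hq_ne_px) (site_ne_row ?_))
      rw [hpxrow, hq1]; exact rne (by omega) (by omega) (by omega)
  have f4 : coeff Q (pmg C (zT q)) = 0 := by
    refine killK (zT q) ?_ (Or.inr (singleSite_ne _ (Ne.symm hq_ne_px)))
      (Or.inl (singleSite_self _ _))
    intro p hp
    rw [singleSite_ne_I hp]
    exact ⟨k₁ - 1, by omega, hq1⟩
  rw [hMeq, f1, f2, f4] at hM
  have hdd : dd (xT q) C ≠ 0 := by
    unfold dd xT
    rw [pph_single_left, pph_single_right, hCq]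
    simp [phase, sub_eq_zero, Complex.ext_iff]
  have hhx' : (hx : ℂ) ≠ 0 := Complex.ofReal_ne_zero.2 hhx
  have hM' : (hx : ℂ) * (dd (xT q) C * coeff Q A) = 0 := by
    rw [← hM]; ring
  rcases mul_eq_zero.1 hM' with h | h
  · exact absurd h hhx'
  · rcases mul_eq_zero.1 h with h' | h'
    · exact absurd h' hdd
    · exact h'


/-! ### Reflection of the lattice in the first coordinate -/

/-- reflection `p ↦ (c − p₁, p₂)` of the lattice -/
def rho (c : ZMod L) : Site L → Site L := fun p => (c - p.1, p.2)

lemma rho_invol (c : ZMod L) : Function.Involutive (rho (L := L) c) := by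
  intro p
  simp [rho]

/-- the induced permutation of spin configurations -/
noncomputable def rEq [NeZero L] (c : ZMod L) : (Site L → Fin 2) ≃ (Site L → Fin 2) :=
  Function.Involutive.toPerm (fun s => fun p => s (rho c p))
    (fun s => funext fun p => congrArg s (rho_invol c p))

lemma rEq_apply [NeZero L] (c : ZMod L) (s : Site L → Fin 2) :
    rEq c s = fun p => s (rho c p) := rfl

lemma pauliProd_reflect [NeZero L] (c : ZMod L) (A : Site L → PauliOp) :
    pauliProd (fun p => A (rho c p)) = (pauliProd A).submatrix (rEq c) (rEq c) := by
  ext s t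
  simp only [pauliProd, Matrix.submatrix_apply, rEq_apply]
  refine Fintype.prod_bijective (rho c) (rho_invol c).bijective _ _ (fun p => ?_)
  rw [rho_invol c p]

lemma trace_submatrix_rEq [NeZero L] (c : ZMod L)
    (M : Matrix (Site L → Fin 2) (Site L → Fin 2) ℂ) :
    (M.submatrix (rEq c) (rEq c)).trace = M.trace := by
  unfold Matrix.trace
  simp only [Matrix.diag_apply, Matrix.submatrix_apply]
  exact Equiv.sum_comp (rEq c) (fun s => M s s)

lemma coeff_reflect [NeZero L] (c : ZMod L)
    (Q : Matrix (Site L → Fin 2) (Site L → Fin 2) ℂ) (A : Site L → PauliOp) :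
    coeff (Q.submatrix (rEq c) (rEq c)) A = coeff Q (fun p => A (rho c p)) := by
  unfold coeff
  congr 1
  calc (pauliProd A * Q.submatrix (⇑(rEq c)) (⇑(rEq c))).trace
      = ((pauliProd (fun p => A (rho c p))).submatrix (⇑(rEq c)) (⇑(rEq c))
          * Q.submatrix (⇑(rEq c)) (⇑(rEq c))).trace := by
        have hAA : (fun p => A (rho c (rho c p))) = A :=
          funext fun p => congrArg A (rho_invol c p)
        have h2 := pauliProd_reflect (L := L) c (fun p' => A (rho c p'))
        rw [hAA] at h2
        rw [h2]
    _ = ((pauliProd (fun p => A (rho c p)) * Q).submatrix (⇑(rEq c)) (⇑(rEq c))).trace := by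
        rw [Matrix.submatrix_mul_equiv]
    _ = (pauliProd (fun p => A (rho c p)) * Q).trace := trace_submatrix_rEq c _

lemma twoSiteZZ_comm (r s : Site L) : twoSiteZZ r s = twoSiteZZ s r := by
  funext p
  unfold twoSiteZZ
  simp [or_comm]

lemma ham_reflect [NeZero L] (c : ZMod L) (J1 J2 hx hz : ℝ) :
    (ham (L := L) J1 J2 hx hz).submatrix (rEq c) (rEq c) = ham (L := L) J1 J2 hx hz := by
  have hZZrho : ∀ r s : Site L, (fun p => twoSiteZZ r s (rho c p)) = twoSiteZZ (rho c r) (rho c s) := by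
    intro r s
    funext p
    unfold twoSiteZZ
    have hiff : (rho c p = r ∨ rho c p = s) ↔ (p = rho c r ∨ p = rho c s) := by
      rw [(rho_invol c).eq_iff, (rho_invol c).eq_iff]
    exact if_congr hiff rfl rfl
  have hSSrho : ∀ (r : Site L) (P : PauliOp),
      (fun p => singleSite r P (rho c p)) = singleSite (rho c r) P := by
    intro r P
    funext p
    unfold singleSite
    exact if_congr (rho_invol c).eq_iff rfl rfl
  have hSsum : ∀ (F : Site L → Matrix (Site L → Fin 2) (Site L → Fin 2) ℂ),
      (∑ i : Site L, F i).submatrix (⇑(rEq c)) (⇑(rEq c))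
        = ∑ i : Site L, (F i).submatrix (⇑(rEq c)) (⇑(rEq c)) := by
    intro F
    ext a b
    simp [Matrix.submatrix_apply, Matrix.sum_apply]
  have hham : ham (L := L) J1 J2 hx hz = ∑ r : Site L,
      ((J1 : ℂ) • pauliProd (twoSiteZZ r (r.1 + 1, r.2))
        + (J2 : ℂ) • pauliProd (twoSiteZZ r (r.1, r.2 + 1))
        + (hx : ℂ) • pauliProd (singleSite r PauliOp.X)
        + (hz : ℂ) • pauliProd (singleSite r PauliOp.Z)) := rfl
  rw [hham, hSsum]
  have hterm : ∀ r : Site L,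
      ((J1 : ℂ) • pauliProd (twoSiteZZ r (r.1 + 1, r.2))
        + (J2 : ℂ) • pauliProd (twoSiteZZ r (r.1, r.2 + 1))
        + (hx : ℂ) • pauliProd (singleSite r PauliOp.X)
        + (hz : ℂ) • pauliProd (singleSite r PauliOp.Z)).submatrix (⇑(rEq c)) (⇑(rEq c))
      = (J1 : ℂ) • pauliProd (twoSiteZZ (rho c r) (rho c (r.1 + 1, r.2)))
        + (J2 : ℂ) • pauliProd (twoSiteZZ (rho c r) (rho c (r.1, r.2 + 1)))
        + (hx : ℂ) • pauliProd (singleSite (rho c r) PauliOp.X)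
        + (hz : ℂ) • pauliProd (singleSite (rho c r) PauliOp.Z) := by
    intro r
    rw [← hZZrho, ← hZZrho, ← hSSrho, ← hSSrho]
    simp only [Matrix.submatrix_add, Pi.add_apply, Matrix.submatrix_smul, Pi.smul_apply,
      pauliProd_reflect]
  rw [Finset.sum_congr rfl (fun r _ => hterm r)]
  rw [Finset.sum_add_distrib, Finset.sum_add_distrib, Finset.sum_add_distrib,
    Finset.sum_add_distrib, Finset.sum_add_distrib, Finset.sum_add_distrib]
  congr 1
  congr 1
  congr 1
  · -- vertical ZZ terms
    have hinv1 : Function.Involutive (fun r : Site L => ((c - r.1 - 1 : ZMod L), r.2)) := by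
      intro r
      show ((c - (c - r.1 - 1) - 1 : ZMod L), r.2) = r
      rw [show (c - (c - r.1 - 1) - 1 : ZMod L) = r.1 by ring]
    have := Equiv.sum_comp (Function.Involutive.toPerm _ hinv1)
      (fun r : Site L => (J1 : ℂ) • pauliProd (twoSiteZZ r (r.1 + 1, r.2)))
    rw [← this]
    refine Finset.sum_congr rfl fun r _ => ?_
    have h1 : rho c r = ((c - r.1 - 1 : ZMod L) + 1, r.2) := by
      show ((c - r.1 : ZMod L), r.2) = ((c - r.1 - 1 : ZMod L) + 1, r.2)
      rw [show (c - r.1 - 1 : ZMod L) + 1 = c - r.1 by ring]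
    have h2 : rho c (r.1 + 1, r.2) = ((c - r.1 - 1 : ZMod L), r.2) := by
      show ((c - (r.1 + 1) : ZMod L), r.2) = ((c - r.1 - 1 : ZMod L), r.2)
      rw [show (c - (r.1 + 1) : ZMod L) = c - r.1 - 1 by ring]
    rw [h1, h2, twoSiteZZ_comm]
    rfl
  · -- horizontal ZZ terms
    have hinv2 : Function.Involutive (fun r : Site L => ((c - r.1 : ZMod L), r.2)) := by
      intro r
      show ((c - (c - r.1) : ZMod L), r.2) = r
      rw [show (c - (c - r.1) : ZMod L) = r.1 by ring]
    have := Equiv.sum_comp (Function.Involutive.toPerm _ hinv2)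
      (fun r : Site L => (J2 : ℂ) • pauliProd (twoSiteZZ r (r.1, r.2 + 1)))
    rw [← this]
    refine Finset.sum_congr rfl fun r _ => ?_
    rfl
  · -- X terms
    have hinv2 : Function.Involutive (fun r : Site L => ((c - r.1 : ZMod L), r.2)) := by
      intro r
      show ((c - (c - r.1) : ZMod L), r.2) = r
      rw [show (c - (c - r.1) : ZMod L) = r.1 by ring]
    have := Equiv.sum_comp (Function.Involutive.toPerm _ hinv2)
      (fun r : Site L => (hx : ℂ) • pauliProd (singleSite r PauliOp.X))
    rw [← this]
    refine Finset.sum_congr rfl fun r _ => ?_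
    rfl
  · -- Z terms
    have hinv2 : Function.Involutive (fun r : Site L => ((c - r.1 : ZMod L), r.2)) := by
      intro r
      show ((c - (c - r.1) : ZMod L), r.2) = r
      rw [show (c - (c - r.1) : ZMod L) = r.1 by ring]
    have := Equiv.sum_comp (Function.Involutive.toPerm _ hinv2)
      (fun r : Site L => (hz : ℂ) • pauliProd (singleSite r PauliOp.Z))
    rw [← this]
    refine Finset.sum_congr rfl fun r _ => ?_
    rfl

lemma cand_reflect [NeZero L] (c : ZMod L) (J1 J2 hx hz : ℝ) (k₁ : ℕ)
    (Q : Matrix (Site L → Fin 2) (Site L → Fin 2) ℂ)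
    (hQ : IsCandidate J1 J2 hx hz k₁ Q) :
    IsCandidate J1 J2 hx hz k₁ (Q.submatrix (rEq c) (rEq c)) := by
  constructor
  · calc Q.submatrix (rEq c) (rEq c) * ham (L := L) J1 J2 hx hz
        = Q.submatrix (rEq c) (rEq c)
            * (ham (L := L) J1 J2 hx hz).submatrix (rEq c) (rEq c) := by
          rw [ham_reflect]
      _ = (Q * ham (L := L) J1 J2 hx hz).submatrix (rEq c) (rEq c) :=
          Matrix.submatrix_mul_equiv _ _ _ _ _
      _ = (ham (L := L) J1 J2 hx hz * Q).submatrix (rEq c) (rEq c) := by rw [hQ.1]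
      _ = (ham (L := L) J1 J2 hx hz).submatrix (rEq c) (rEq c)
            * Q.submatrix (rEq c) (rEq c) :=
          (Matrix.submatrix_mul_equiv _ _ _ _ _).symm
      _ = ham (L := L) J1 J2 hx hz * Q.submatrix (rEq c) (rEq c) := by rw [ham_reflect]
  · intro A0 hA0
    rw [coeff_reflect] at hA0
    obtain ⟨ℓ₁, ℓ₂, h1, h2, rb, hbox⟩ := hQ.2 _ hA0
    obtain ⟨hb1, ⟨p2, hp2a, hp2b⟩, ⟨p3, hp3a, hp3b⟩, ⟨p4, hp4a, hp4b⟩, ⟨p5, hp5a, hp5b⟩⟩ := hbox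
    have hl1 : 1 ≤ ℓ₁ := by
      obtain ⟨⟨n, hn, -⟩, -⟩ := hb1 p2 hp2a
      omega
    refine ⟨ℓ₁, ℓ₂, h1, h2, (c - rb.1 - ((ℓ₁ - 1 : ℕ) : ZMod L), rb.2), ?_, ?_, ?_, ?_, ?_⟩
    · intro p hp
      have hp' : A0 (rho c (rho c p)) ≠ PauliOp.I := by
        rw [rho_invol c p]; exact hp
      obtain ⟨⟨n, hn, hna⟩, ⟨n2, hn2, hn2a⟩⟩ := hb1 (rho c p) hp'
      constructor
      · refine ⟨ℓ₁ - 1 - n, by omega, ?_⟩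
        have hca : c - p.1 = rb.1 + (n : ZMod L) := hna
        have hp1 : p.1 = c - (rb.1 + (n : ZMod L)) := by rw [← hca]; ring
        rw [hp1, Nat.cast_sub (by omega : n ≤ ℓ₁ - 1), Nat.cast_sub (by omega : 1 ≤ ℓ₁)]
        push_cast
        ring
      · exact ⟨n2, hn2, hn2a⟩
    · refine ⟨rho c p3, hp3a, ?_⟩
      show c - p3.1 = _
      rw [hp3b, Nat.cast_sub (by omega : 1 ≤ ℓ₁)]
      push_cast
      ring
    · refine ⟨rho c p2, hp2a, ?_⟩
      show c - p2.1 = _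
      rw [hp2b]
      ring
    · exact ⟨rho c p4, hp4a, hp4b⟩
    · exact ⟨rho c p5, hp5a, hp5b⟩

/-- **Lemma 1.** Assume `J¹ ≠ 0` and `hˣ ≠ 0`. For `2 ≤ k₁` with `2·k₁ ≤ L` and any
`k₁`-candidate `Q`, the coefficient of `Q` vanishes on every `(k₁,ℓ₂)`-support Pauli
product of type ii-b that contains the Pauli operator `X` at some site of its
non-`Z` edge. -/
theorem lemma_type_ii_b_with_X (L : ℕ) [NeZero L] (J1 J2 hx hz : ℝ)
    (hJ1 : J1 ≠ 0) (hhx : hx ≠ 0)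
    (k₁ : ℕ) (hk₁ : 2 ≤ k₁) (hk₁L : 2 * k₁ ≤ L)
    (Q : Matrix (Site L → Fin 2) (Site L → Fin 2) ℂ)
    (hQ : IsCandidate J1 J2 hx hz k₁ Q)
    (ℓ₂ : ℕ) (hℓ₂1 : 1 ≤ ℓ₂) (hℓ₂L : ℓ₂ ≤ L)
    (A : Site L → PauliOp) (r : Site L)
    (hsupp : IsSupportedAt A r k₁ ℓ₂)
    (htype :
      (HasXYOn A (upperEdge r) ∧ AllZIOn A (lowerEdge r k₁) ∧ OneZOn A (lowerEdge r k₁) ∧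
        ∃ p : Site L, p.1 = upperEdge r ∧ A p = PauliOp.X)
      ∨ (HasXYOn A (lowerEdge r k₁) ∧ AllZIOn A (upperEdge r) ∧ OneZOn A (upperEdge r) ∧
        ∃ p : Site L, p.1 = lowerEdge r k₁ ∧ A p = PauliOp.X)) :
    coeff Q A = 0 := by
  have hsup1 : ∀ p, A p ≠ PauliOp.I → ∃ n, n < k₁ ∧ p.1 = r.1 + (n : ZMod L) :=
    fun p h => (hsupp.1 p h).1
  rcases htype with ⟨-, -, hone, hX⟩ | ⟨-, -, hone, hX⟩
  · -- the `Z` edge is the lower edge: apply `main_up` directly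
    obtain ⟨q, ⟨hq1, hq2⟩, -⟩ := hone
    obtain ⟨px, hpx1, hpx2⟩ := hX
    have hq1' : q.1 = r.1 + ((k₁ - 1 : ℕ) : ZMod L) := hq1
    have hpx1' : px.1 = r.1 := hpx1
    exact main_up hQ hJ1 hhx hk₁ hk₁L A r.1 hsup1 q hq1' hq2 px hpx1' hpx2
  · -- the `Z` edge is the upper edge: reflect the lattice first
    obtain ⟨q, ⟨hq1, hq2⟩, -⟩ := hone
    obtain ⟨px, hpx1, hpx2⟩ := hX
    have hq1' : q.1 = r.1 := hq1
    have hpx1' : px.1 = r.1 + ((k₁ - 1 : ℕ) : ZMod L) := hpx1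
    set c : ZMod L := r.1 + r.1 + ((k₁ - 1 : ℕ) : ZMod L) with hc
    have hQ' := cand_reflect c J1 J2 hx hz k₁ Q hQ
    have hsup' : ∀ p, (fun p' => A (rho c p')) p ≠ PauliOp.I →
        ∃ n, n < k₁ ∧ p.1 = r.1 + (n : ZMod L) := by
      intro p hp
      obtain ⟨n, hn, hna⟩ := hsup1 (rho c p) hp
      refine ⟨k₁ - 1 - n, by omega, ?_⟩
      have hca : c - p.1 = r.1 + (n : ZMod L) := hna
      have hp1 : p.1 = c - (r.1 + (n : ZMod L)) := by rw [← hca]; ring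
      rw [hp1, hc, Nat.cast_sub (by omega : n ≤ k₁ - 1), Nat.cast_sub (by omega : 1 ≤ k₁)]
      push_cast
      ring
    have hrq1 : (rho c q).1 = r.1 + ((k₁ - 1 : ℕ) : ZMod L) := by
      show c - q.1 = _
      rw [hq1', hc]
      ring
    have hrq2 : A (rho c (rho c q)) = PauliOp.Z := by rw [rho_invol c q]; exact hq2
    have hrpx1 : (rho c px).1 = r.1 := by
      show c - px.1 = r.1
      rw [hpx1', hc]
      ring
    have hrpx2 : A (rho c (rho c px)) = PauliOp.X := by rw [rho_invol c px]; exact hpx2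
    have hres := main_up hQ' hJ1 hhx hk₁ hk₁L (fun p => A (rho c p)) r.1 hsup'
      (rho c q) hrq1 hrq2 (rho c px) hrpx1 hrpx2
    have hAA : (fun p => A (rho c (rho c p))) = A :=
      funext fun p => congrArg A (rho_invol c p)
    have h2 := coeff_reflect c Q (fun p => A (rho c p))
    rw [hAA] at h2
    rw [← h2]
    exact hres

end Ising2D
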